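/- arXiv:1507.04545 — 3 statements merged into one kernel-verified Lean document; each statement's English description precedes it below -/
import Mathlib

section
/- For every m ∈ [2, ∞) there exists a constant c > 0 such that for all real numbers a, b one has (a - b)(a^[m-1] - b^[m-1]) ≥ c |a - b|^m, where x^[r] denotes |x|^(r-1)·x (the signed power). -/
/-- Signed power: `x^[r] = |x|^(r-1) * x` (real exponent, `0^[r] = 0`). -/
noncomputable def sgnPow (x r : ℝ) : ℝ := |x| ^ (r - 1) * x

lemma sgnPow_neg (x r : ℝ) : sgnPow (-x) r = - sgnPow x r := by
  simp [sgnPow]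

lemma sgnPow_nonneg_eq {x : ℝ} (hx : 0 ≤ x) (r : ℝ) (hr : 1 ≤ r) :
    sgnPow x r = x ^ r := by
  rcases eq_or_lt_of_le hx with h | h
  · simp [sgnPow, ← h, Real.zero_rpow (by linarith : r ≠ 0)]
  · rw [sgnPow, abs_of_pos h, ← Real.rpow_add_one h.ne', sub_add_cancel]

lemma real_add_rpow_le_rpow_add {p x y : ℝ} (hx : 0 ≤ x) (hy : 0 ≤ y) (hp : 1 ≤ p) :
    x ^ p + y ^ p ≤ (x + y) ^ p := by
  have h := NNReal.add_rpow_le_rpow_add x.toNNReal y.toNNReal hp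
  have h' := NNReal.coe_le_coe.mpr h
  simpa [NNReal.coe_rpow, Real.coe_toNNReal _ hx, Real.coe_toNNReal _ hy] using h'

lemma real_rpow_add_le {p x y : ℝ} (hx : 0 ≤ x) (hy : 0 ≤ y) (hp : 1 ≤ p) :
    (x + y) ^ p ≤ (2 : ℝ) ^ (p - 1) * (x ^ p + y ^ p) := by
  have h := NNReal.rpow_add_le_mul_rpow_add_rpow x.toNNReal y.toNNReal hp
  have h' := NNReal.coe_le_coe.mpr h
  simpa [NNReal.coe_rpow, NNReal.coe_mul, Real.coe_toNNReal _ hx, Real.coe_toNNReal _ hy] using h'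

/-- Key pointwise estimate for `a ≥ b`. -/
lemma key {m a b : ℝ} (hm : 2 ≤ m) (hab : b ≤ a) :
    (2 : ℝ) ^ (2 - m) * (a - b) ^ (m - 1)
      ≤ sgnPow a (m - 1) - sgnPow b (m - 1) := by
  have hp : (1 : ℝ) ≤ m - 1 := by linarith
  have hd : 0 ≤ a - b := by linarith
  have h2 : (2 : ℝ) ^ (2 - m) ≤ 1 := by
    apply Real.rpow_le_one_of_one_le_of_nonpos <;> linarith
  have hcase2 : ∀ x y : ℝ, 0 ≤ y → y ≤ x →
      (2 : ℝ) ^ (2 - m) * (x - y) ^ (m - 1)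
        ≤ sgnPow x (m - 1) - sgnPow y (m - 1) := by
    intro x y hy hyx
    rw [sgnPow_nonneg_eq (hy.trans hyx) _ hp, sgnPow_nonneg_eq hy _ hp]
    have h1 : (x - y) ^ (m - 1) + y ^ (m - 1) ≤ x ^ (m - 1) := by
      have := real_add_rpow_le_rpow_add (x := x - y) (y := y) (by linarith) hy hp
      simpa using this
    have h3 : (2 : ℝ) ^ (2 - m) * (x - y) ^ (m - 1) ≤ (x - y) ^ (m - 1) := by
      nlinarith [Real.rpow_nonneg (by linarith : (0:ℝ) ≤ x - y) (m - 1)]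
    linarith
  rcases le_or_gt 0 b with hb | hb
  · exact hcase2 a b hb hab
  rcases le_or_gt a 0 with ha | ha
  · have := hcase2 (-b) (-a) (by linarith) (by linarith)
    rw [sgnPow_neg, sgnPow_neg] at this
    have he : (-b) - (-a) = a - b := by ring
    rw [he] at this
    linarith
  · -- b < 0 < a
    have e1 : sgnPow a (m - 1) = a ^ (m - 1) := sgnPow_nonneg_eq ha.le _ hp
    have e2 : sgnPow b (m - 1) = -((-b) ^ (m - 1)) := by
      have hn := sgnPow_neg (-b) (m - 1)
      rw [neg_neg] at hn
      rw [hn, sgnPow_nonneg_eq (by linarith : (0:ℝ) ≤ -b) _ hp]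
    rw [e1, e2]
    have h := real_rpow_add_le (x := a) (y := -b) ha.le (by linarith) hp
    have he : a + -b = a - b := by ring
    rw [he] at h
    have h2m : (2 : ℝ) ^ (2 - m) * (2 : ℝ) ^ (m - 1 - 1) = 1 := by
      rw [← Real.rpow_add (by norm_num), show 2 - m + (m - 1 - 1) = 0 by ring,
        Real.rpow_zero]
    have hpos : (0:ℝ) < (2 : ℝ) ^ (2 - m) := Real.rpow_pos_of_pos (by norm_num) _
    calc (2 : ℝ) ^ (2 - m) * (a - b) ^ (m - 1)
        ≤ (2 : ℝ) ^ (2 - m) * ((2 : ℝ) ^ (m - 1 - 1) * (a ^ (m - 1) + (-b) ^ (m - 1))) :=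
          by exact mul_le_mul_of_nonneg_left h hpos.le
      _ = a ^ (m - 1) + (-b) ^ (m - 1) := by rw [← mul_assoc, h2m, one_mul]
      _ = a ^ (m - 1) - -(-b) ^ (m - 1) := by ring

/-- For every `m ∈ [2,∞)` there is `c > 0` such that
`(a - b) * (a^[m-1] - b^[m-1]) ≥ c * |a - b|^m` for all reals `a, b`. -/
theorem stmt0 :
    ∀ m : ℝ, 2 ≤ m →
      ∃ c : ℝ, 0 < c ∧ ∀ a b : ℝ,
        c * |a - b| ^ m ≤ (a - b) * (sgnPow a (m - 1) - sgnPow b (m - 1)) := by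
  intro m hm
  refine ⟨(2 : ℝ) ^ (2 - m), Real.rpow_pos_of_pos (by norm_num) _, ?_⟩
  have main : ∀ a b : ℝ, b ≤ a →
      (2 : ℝ) ^ (2 - m) * |a - b| ^ m
        ≤ (a - b) * (sgnPow a (m - 1) - sgnPow b (m - 1)) := by
    intro a b hab
    have hd : 0 ≤ a - b := by linarith
    have h := key hm hab
    have h' := mul_le_mul_of_nonneg_left h hd
    calc (2 : ℝ) ^ (2 - m) * |a - b| ^ m
        = (a - b) * ((2 : ℝ) ^ (2 - m) * (a - b) ^ (m - 1)) := by
          rw [abs_of_nonneg hd]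
          rcases eq_or_lt_of_le hd with h0 | h0
          · rw [← h0, Real.zero_rpow (by linarith : m ≠ 0),
              Real.zero_rpow (by linarith : m - 1 ≠ 0)]; ring
          · rw [show m = 1 + (m - 1) by ring, Real.rpow_add h0, Real.rpow_one]
            ring_nf
      _ ≤ (a - b) * (sgnPow a (m - 1) - sgnPow b (m - 1)) := h'
  intro a b
  rcases le_total b a with hab | hab
  · exact main a b hab
  · have := main b a hab
    have he1 : |a - b| = |b - a| := abs_sub_comm a b
    have he2 : (a - b) * (sgnPow a (m - 1) - sgnPow b (m - 1))
        = (b - a) * (sgnPow b (m - 1) - sgnPow a (m - 1)) := by ring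
    rw [he1, he2]
    exact this
end

section
/- Let ψ(a) = |a|^p / p for p ∈ [1,2), and let ψ^δ be its Moreau–Yosida regularization. Then there exist constants c > 0 and C > 0 such that for all δ ∈ (0,1] and all a ∈ ℝ, ψ^δ(a) ≥ c·ψ(a) − C·δ. -/
/-- The singular power `ψ(a) = |a|^p / p`. -/
noncomputable def psi (p a : ℝ) : ℝ := |a| ^ p / p

/-- The Moreau–Yosida regularization `ψ^δ(a) = inf_b ( |a-b|²/(2δ) + ψ(b) )`. -/
noncomputable def psiMY (p δ a : ℝ) : ℝ := ⨅ b : ℝ, ((a - b) ^ 2 / (2 * δ) + psi p b)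

/-- For `p ∈ [1,2)` there are `c, C > 0` with `ψ^δ(a) ≥ c·ψ(a) − C·δ`
for all `δ ∈ (0,1]` and all `a ∈ ℝ`. -/
theorem stmt2 (p : ℝ) (hp1 : 1 ≤ p) (hp2 : p < 2) :
    ∃ c C : ℝ, 0 < c ∧ 0 < C ∧ ∀ δ ∈ Set.Ioc (0 : ℝ) 1, ∀ a : ℝ,
      c * psi p a - C * δ ≤ psiMY p δ a := by
  have hp0 : (0:ℝ) < p := lt_of_lt_of_le one_pos hp1
  refine ⟨(2 * 2 ^ p)⁻¹, 1, by positivity, one_pos, ?_⟩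
  intro δ hδ a
  obtain ⟨hδ0, hδ1⟩ := hδ
  apply le_ciInf
  intro b
  set t := |a - b| with ht
  have ht0 : 0 ≤ t := abs_nonneg _
  have h2p : (0:ℝ) < 2 - p := by linarith
  -- key : t ^ p ≤ t^(2:ℝ)/δ + δ
  have key : t ^ p ≤ t ^ (2:ℝ) / δ + δ := by
    have hT : 0 ≤ t ^ (2:ℝ) := Real.rpow_nonneg ht0 _
    rcases le_or_gt t (δ ^ ((2 - p)⁻¹)) with h | h
    · have h1 : t ^ p ≤ (δ ^ ((2 - p)⁻¹)) ^ p :=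
        Real.rpow_le_rpow ht0 h hp0.le
      have h2 : (δ ^ ((2 - p)⁻¹)) ^ p = δ ^ ((2 - p)⁻¹ * p) := by
        rw [← Real.rpow_mul hδ0.le]
      have h3 : δ ^ ((2 - p)⁻¹ * p) ≤ δ ^ (1:ℝ) := by
        apply Real.rpow_le_rpow_of_exponent_ge hδ0 hδ1
        rw [inv_mul_eq_div, le_div_iff₀ h2p]
        linarith
      have h4 : t ^ p ≤ δ := by
        rw [← Real.rpow_one δ]
        exact h1.trans (h2.le.trans h3)
      exact h4.trans (le_add_of_nonneg_left (div_nonneg hT hδ0.le))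
    · have htpos : 0 < t := lt_of_le_of_lt (Real.rpow_nonneg hδ0.le _) h
      have h1 : t ^ (p - 2) ≤ (δ ^ ((2 - p)⁻¹)) ^ (p - 2) := by
        apply Real.rpow_le_rpow_of_nonpos (Real.rpow_pos_of_pos hδ0 _) h.le
        linarith
      have h2 : (δ ^ ((2 - p)⁻¹)) ^ (p - 2) = δ⁻¹ := by
        rw [← Real.rpow_mul hδ0.le, ← Real.rpow_neg_one δ]
        congr 1
        field_simp
        ring
      have h3 : t ^ p = t ^ (2:ℝ) * t ^ (p - 2) := by
        rw [← Real.rpow_add htpos]; ring_nf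
      rw [h3]
      have : t ^ (2:ℝ) * t ^ (p - 2) ≤ t ^ (2:ℝ) * δ⁻¹ := by
        apply mul_le_mul_of_nonneg_left _ hT
        rw [← h2]; exact h1
      calc t ^ (2:ℝ) * t ^ (p-2) ≤ t ^ (2:ℝ) * δ⁻¹ := this
        _ = t ^ (2:ℝ) / δ := by rw [div_eq_mul_inv]
        _ ≤ t ^ (2:ℝ) / δ + δ := by linarith
  -- splitting |a|^p
  have habs : |a| ≤ t + |b| := by
    calc |a| = |(a - b) + b| := by ring_nf
      _ ≤ |a - b| + |b| := abs_add_le _ _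
  have hsplit : |a| ^ p ≤ 2 ^ p * (t ^ p + |b| ^ p) := by
    have h1 : |a| ^ p ≤ (t + |b|) ^ p :=
      Real.rpow_le_rpow (abs_nonneg a) habs hp0.le
    have h2 : t + |b| ≤ 2 * max t |b| := by
      rcases max_cases t |b| with ⟨he, _⟩ | ⟨he, _⟩ <;> rw [he] <;>
        [linarith [le_max_left t |b|, le_max_right t |b|];
         linarith [le_max_left t |b|, le_max_right t |b|]]
    have hmax0 : 0 ≤ max t |b| := le_trans ht0 (le_max_left _ _)
    have h3 : (t + |b|) ^ p ≤ (2 * max t |b|) ^ p :=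
      Real.rpow_le_rpow (by positivity) h2 hp0.le
    have h4 : (2 * max t |b|) ^ p = 2 ^ p * (max t |b|) ^ p :=
      Real.mul_rpow (by norm_num) hmax0
    have h5 : (max t |b|) ^ p ≤ t ^ p + |b| ^ p := by
      rcases max_cases t |b| with ⟨he, _⟩ | ⟨he, _⟩ <;> rw [he] <;>
        nlinarith [Real.rpow_nonneg ht0 p, Real.rpow_nonneg (abs_nonneg b) p]
    calc |a| ^ p ≤ (2 * max t |b|) ^ p := h1.trans h3
      _ = 2 ^ p * (max t |b|) ^ p := h4
      _ ≤ 2 ^ p * (t ^ p + |b| ^ p) := by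
          apply mul_le_mul_of_nonneg_left h5 (by positivity)
  -- final assembly
  have hsq : (a - b) ^ 2 = t ^ (2:ℝ) := by
    rw [ht, Real.rpow_two, sq_abs]
  rw [psi, psi, hsq, one_mul, sub_le_iff_le_add]
  have h2ppos : (0:ℝ) < 2 ^ p := Real.rpow_pos_of_pos two_pos p
  calc (2 * 2 ^ p)⁻¹ * (|a| ^ p / p)
      ≤ (2 * 2 ^ p)⁻¹ * ((2 ^ p * (t ^ p + |b| ^ p)) / p) := by
        gcongr
    _ = (t ^ p + |b| ^ p) / (2 * p) := by field_simp
    _ ≤ ((t ^ (2:ℝ) / δ + δ) + |b| ^ p) / (2 * p) := by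
        gcongr
    _ = t ^ (2:ℝ) / (2 * p * δ) + δ / (2 * p) + |b| ^ p / (2 * p) := by
        field_simp
    _ ≤ t ^ (2:ℝ) / (2 * δ) + δ + |b| ^ p / p := by
        gcongr ?_ + ?_ + ?_
        · apply div_le_div_of_nonneg_left (Real.rpow_nonneg ht0 _) (by positivity)
          nlinarith
        · rw [div_le_iff₀ (by positivity)]; nlinarith
        · apply div_le_div_of_nonneg_left (Real.rpow_nonneg (abs_nonneg b) _) hp0
          linarith
    _ = t ^ (2:ℝ) / (2 * δ) + |b| ^ p / p + δ := by ring
end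

section
/- Let ψ(a) = |a|^p/p with p ∈ [1,2) and ψ^δ its Moreau–Yosida regularization. Then there exists C > 0 such that |ψ^δ(a) − ψ(a)| ≤ C·δ·(1 + ψ(a)) for all a ∈ ℝ and δ ∈ (0,1]. -/
lemma psi_nonneg (p a : ℝ) (hp : 1 ≤ p) : 0 ≤ psi p a :=
  div_nonneg (Real.rpow_nonneg (abs_nonneg a) p) (by linarith)

/-- Convexity-type inequality: ψ(a) - ψ(b) ≤ |a|^(p-1) |a-b|. -/
lemma psi_sub_le (p : ℝ) (hp1 : 1 ≤ p) (a b : ℝ) :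
    psi p a - psi p b ≤ |a| ^ (p - 1) * |a - b| := by
  have hp0 : (0:ℝ) < p := by linarith
  rcases le_or_gt |a| |b| with h | h
  · have h1 : psi p a ≤ psi p b := by
      unfold psi
      gcongr <;> first | exact abs_nonneg a | exact h | linarith
    have h2 : 0 ≤ |a| ^ (p - 1) * |a - b| :=
      mul_nonneg (Real.rpow_nonneg (abs_nonneg a) _) (abs_nonneg _)
    linarith
  · have ha : (0:ℝ) < |a| := lt_of_le_of_lt (abs_nonneg b) h
    set t : ℝ := |b| / |a| with ht
    have ht0 : 0 ≤ t := div_nonneg (abs_nonneg b) ha.le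
    have hB : 1 + p * (t - 1) ≤ (1 + (t - 1)) ^ p :=
      one_add_mul_self_le_rpow_one_add (by linarith) hp1
    rw [add_sub_cancel] at hB
    have htp : t ^ p = |b| ^ p / |a| ^ p := Real.div_rpow (abs_nonneg b) ha.le p
    have hap : (0:ℝ) < |a| ^ p := Real.rpow_pos_of_pos ha p
    -- multiply Bernoulli by |a|^p
    have hmul : |a| ^ p * (1 + p * (t - 1)) ≤ |b| ^ p := by
      calc |a| ^ p * (1 + p * (t - 1)) ≤ |a| ^ p * t ^ p := by
            exact mul_le_mul_of_nonneg_left hB hap.le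
        _ = |b| ^ p := by rw [htp, mul_div_cancel₀ _ hap.ne']
    have hsplit : |a| ^ p * t = |a| ^ (p - 1) * |b| := by
      rw [ht]
      have : |a| ^ (p - 1) = |a| ^ p / |a| := by
        rw [Real.rpow_sub ha, Real.rpow_one]
      rw [this]; field_simp
    have hpa : |a| ^ p = |a| ^ (p - 1) * |a| := by
      have h := Real.rpow_add ha (p - 1) 1
      rw [sub_add_cancel, Real.rpow_one] at h
      exact h
    have e1 : |a| ^ p * (p * (t - 1)) = p * (|a| ^ (p - 1) * |b|) - p * |a| ^ p := by
      have h2 : |a| ^ p * (p * (t - 1)) = p * (|a| ^ p * t) - p * |a| ^ p := by ring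
      rw [h2, hsplit]
    have hkey : |a| ^ p - |b| ^ p ≤ p * (|a| ^ (p - 1) * |a|) - p * (|a| ^ (p - 1) * |b|) := by
      have h3 : p * |a| ^ p = p * (|a| ^ (p - 1) * |a|) := by rw [hpa]
      linarith [hmul, e1, h3]
    have habs : |a| - |b| ≤ |a - b| := abs_sub_abs_le_abs_sub a b
    have hnn : 0 ≤ |a| ^ (p - 1) := Real.rpow_nonneg (abs_nonneg a) _
    have hfin : |a| ^ p - |b| ^ p ≤ |a| ^ (p - 1) * |a - b| * p := by
      have h4 := mul_le_mul_of_nonneg_left (mul_le_mul_of_nonneg_left habs hnn) hp0.le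
      nlinarith [hkey, h4]
    unfold psi
    rw [div_sub_div_same, div_le_iff₀ hp0]
    linarith [hfin]

/-- Pointwise lower bound on the Moreau envelope integrand. -/
lemma key_lb (p : ℝ) (hp1 : 1 ≤ p) (hp2 : p < 2) (a δ : ℝ) (hδ : 0 < δ) (hδ1 : δ ≤ 1)
    (b : ℝ) : psi p a - p * δ * (1 + psi p a) ≤ (a - b) ^ 2 / (2 * δ) + psi p b := by
  have hp0 : (0:ℝ) < p := by linarith
  have h1 := psi_sub_le p hp1 a b
  set v : ℝ := |a| ^ (p - 1) with hv
  have hvnn : 0 ≤ v := Real.rpow_nonneg (abs_nonneg a) _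
  -- Young: v * |a-b| ≤ (a-b)^2/(2δ) + δ/2 * v^2
  have h2 : v * |a - b| ≤ (a - b) ^ 2 / (2 * δ) + δ / 2 * v ^ 2 := by
    have hsq : (0:ℝ) ≤ (|a - b| - δ * v) ^ 2 := sq_nonneg _
    have habs : |a - b| ^ 2 = (a - b) ^ 2 := sq_abs _
    rw [div_add' _ _ _ (by positivity), le_div_iff₀ (by positivity)]
    nlinarith
  -- v^2 ≤ 1 + |a|^p
  have h3 : v ^ 2 ≤ 1 + |a| ^ p := by
    have hvv : v ^ 2 = |a| ^ (p - 1 + (p - 1)) := by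
      rw [Real.rpow_add_of_nonneg (abs_nonneg a) (by linarith) (by linarith), sq]
    rcases le_or_gt |a| 1 with h | h
    · have : |a| ^ (p - 1 + (p - 1)) ≤ 1 :=
        Real.rpow_le_one (abs_nonneg a) h (by linarith)
      have hap : 0 ≤ |a| ^ p := Real.rpow_nonneg (abs_nonneg a) p
      linarith [hvv ▸ this]
    · have : |a| ^ (p - 1 + (p - 1)) ≤ |a| ^ p :=
        Real.rpow_le_rpow_of_exponent_le h.le (by linarith)
      linarith [hvv ▸ this]
  have hpsia : |a| ^ p = p * psi p a := by unfold psi; field_simp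
  have hψ : 0 ≤ psi p a := psi_nonneg p a hp1
  have h4 : δ / 2 * v ^ 2 ≤ p * δ * (1 + psi p a) := by
    have : δ / 2 * v ^ 2 ≤ δ / 2 * (1 + p * psi p a) := by
      rw [← hpsia]; nlinarith
    nlinarith
  have h5 : psi p a - psi p b ≤ v * |a - b| := h1
  linarith

/-- For `p ∈ [1,2)` there is `C > 0` such that
`|ψ^δ(a) − ψ(a)| ≤ C·δ·(1 + ψ(a))` for all `a ∈ ℝ`, `δ ∈ (0,1]`. -/
theorem stmt3 (p : ℝ) (hp1 : 1 ≤ p) (hp2 : p < 2) :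
    ∃ C : ℝ, 0 < C ∧ ∀ a : ℝ, ∀ δ ∈ Set.Ioc (0 : ℝ) 1,
      |psiMY p δ a - psi p a| ≤ C * δ * (1 + psi p a) := by
  refine ⟨p, by linarith, fun a δ hδ => ?_⟩
  obtain ⟨hδ0, hδ1⟩ := hδ
  have hψ : 0 ≤ psi p a := psi_nonneg p a hp1
  have hbdd : BddBelow (Set.range fun b : ℝ => (a - b) ^ 2 / (2 * δ) + psi p b) := by
    refine ⟨psi p a - p * δ * (1 + psi p a), ?_⟩
    rintro x ⟨b, rfl⟩
    exact key_lb p hp1 hp2 a δ hδ0 hδ1 b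
  have hub : psiMY p δ a ≤ psi p a := by
    have := ciInf_le hbdd a
    simpa [psiMY] using this
  have hlb : psi p a - p * δ * (1 + psi p a) ≤ psiMY p δ a :=
    le_ciInf (key_lb p hp1 hp2 a δ hδ0 hδ1)
  rw [abs_le]
  constructor
  · linarith
  · nlinarith
end
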